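/- Let t > 0, let η be a probability measure on [0,∞), and let φ : (0,∞) → [0,∞) satisfy ∫_{[0,∞)} e^{−λs} dη(s) = e^{−tφ(λ)} for every λ > 0. Suppose moreover that there are constants c₁ > 0, γ > 0 and s₀ > 0 such that φ(λ) ≤ c₁·λ^γ for all λ ∈ (0, s₀]. Then for every A ≥ 1/s₀ one has η((A,∞)) ≤ (c₁·t)/(γ·(1 − e^{−1})) · A^{−γ}. -/

import Mathlib

open MeasureTheory

private lemma chord_exp {x : ℝ} (hx0 : 0 ≤ x) (hx1 : x ≤ 1) :
    x * (1 - Real.exp (-1)) ≤ 1 - Real.exp (-x) := by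
  have h := convexOn_exp.2 (Set.mem_univ (0:ℝ)) (Set.mem_univ (-1:ℝ))
    (by linarith : (0:ℝ) ≤ 1 - x) hx0 (by ring)
  simp only [smul_eq_mul, mul_zero, mul_neg_one, zero_add, Real.exp_zero, mul_one] at h
  nlinarith [h]

/-- Consequence of Lemma 2.1 under assumption (L1): if the Laplace exponent satisfies
`φ(λ) ≤ c₁ λ^γ` for `λ ∈ (0,s₀]`, then `η((A,∞)) ≤ c₁ t/(γ(1-e⁻¹)) · A^{-γ}`
for every `A ≥ 1/s₀`. -/
theorem stmt_11
    (t : ℝ) (ht : 0 < t)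
    (η : Measure ℝ) [IsProbabilityMeasure η] (hsupp : η (Set.Iio 0) = 0)
    (φ : ℝ → ℝ) (hφ : ∀ l : ℝ, 0 < l → 0 ≤ φ l)
    (hLaplace : ∀ l : ℝ, 0 < l →
      ∫ s in Set.Ici (0:ℝ), Real.exp (-l * s) ∂η = Real.exp (-(t * φ l)))
    (c₁ γ s₀ : ℝ) (hc₁ : 0 < c₁) (hγ : 0 < γ) (hs₀ : 0 < s₀)
    (hφle : ∀ l : ℝ, 0 < l → l ≤ s₀ → φ l ≤ c₁ * l ^ γ)
    (A : ℝ) (hA : s₀⁻¹ ≤ A) :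
    η (Set.Ioi A) ≤ ENNReal.ofReal (c₁ * t / (γ * (1 - Real.exp (-1))) * A ^ (-γ)) := by
  have hA0 : 0 < A := lt_of_lt_of_le (inv_pos.mpr hs₀) hA
  have he1 : Real.exp (-1) < 1 := by
    rw [Real.exp_lt_one_iff]; norm_num
  -- choose θ
  obtain ⟨θ, hθ0, hθ1, hθkey⟩ :
      ∃ θ : ℝ, 0 < θ ∧ θ ≤ 1 ∧ γ * θ ^ γ * (1 - Real.exp (-1)) ≤ 1 - Real.exp (-θ) := by
    rcases le_or_gt γ 1 with h | h
    · refine ⟨1, one_pos, le_rfl, ?_⟩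
      rw [Real.one_rpow]
      have h2 := chord_exp (x := 1) zero_le_one le_rfl
      nlinarith
    · refine ⟨γ ^ (-(γ-1)⁻¹), Real.rpow_pos_of_pos (by linarith) _,
        Real.rpow_le_one_of_one_le_of_nonpos (by linarith)
          (by rw [neg_nonpos]; exact inv_nonneg.mpr (by linarith)), ?_⟩
      have hγ0 : (0:ℝ) < γ := hγ
      have hne : γ - 1 ≠ 0 := sub_ne_zero.mpr h.ne'
      have hkey : γ * (γ ^ (-(γ-1)⁻¹)) ^ γ = γ ^ (-(γ-1)⁻¹) := by
        nth_rewrite 1 [← Real.rpow_one γ]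
        rw [← Real.rpow_mul hγ0.le, ← Real.rpow_add hγ0]
        congr 1
        field_simp
        ring
      rw [hkey]
      exact chord_exp (Real.rpow_pos_of_pos hγ0 _).le
        (Real.rpow_le_one_of_one_le_of_nonpos (by linarith) (by rw [neg_nonpos]; exact inv_nonneg.mpr (by linarith)))
  set l := θ / A with hl
  have hl0 : 0 < l := div_pos hθ0 hA0
  have hsA : 1 ≤ s₀ * A := by
    have := mul_le_mul_of_nonneg_left hA hs₀.le
    rwa [mul_inv_cancel₀ hs₀.ne'] at this
  have hls : l ≤ s₀ := by
    rw [hl, div_le_iff₀ hA0]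
    nlinarith
  have hmeas : AEStronglyMeasurable (fun s : ℝ => Real.exp (-l * s)) η :=
    (Real.continuous_exp.comp (continuous_const.mul continuous_id)).aestronglyMeasurable
  have hexple : ∀ s : ℝ, 0 ≤ s → Real.exp (-l * s) ≤ 1 := by
    intro s hs
    calc Real.exp (-l * s) ≤ Real.exp 0 := Real.exp_le_exp.mpr (by nlinarith)
      _ = 1 := Real.exp_zero
  have hint : IntegrableOn (fun s : ℝ => Real.exp (-l * s)) (Set.Ici 0) η := by
    apply Measure.integrableOn_of_bounded (M := 1) (measure_ne_top η _) hmeas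
    filter_upwards [ae_restrict_mem measurableSet_Ici] with s hs
    rw [Real.norm_eq_abs, abs_of_pos (Real.exp_pos _)]
    exact hexple s hs
  have hIci : η (Set.Ici (0:ℝ)) = 1 := by
    rw [← Set.compl_Iio, measure_compl measurableSet_Iio (measure_ne_top η _), hsupp,
      measure_univ, tsub_zero]
  have hint1 : IntegrableOn (fun _ : ℝ => (1:ℝ)) (Set.Ici 0) η :=
    integrableOn_const (measure_ne_top η _)
  have hintsub : IntegrableOn (fun s : ℝ => 1 - Real.exp (-l * s)) (Set.Ici 0) η :=
    hint1.sub hint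
  have hsub : ∫ s in Set.Ici (0:ℝ), (1 - Real.exp (-l * s)) ∂η
      = 1 - Real.exp (-(t * φ l)) := by
    rw [integral_sub hint1 hint, hLaplace l hl0, setIntegral_const, measureReal_def, hIci]
    simp
  have hIoisub : Set.Ioi A ⊆ Set.Ici (0:ℝ) := fun x hx => le_of_lt (lt_trans hA0 hx)
  have hmono : ∫ s in Set.Ioi A, (1 - Real.exp (-l * s)) ∂η
      ≤ ∫ s in Set.Ici 0, (1 - Real.exp (-l * s)) ∂η := by
    apply setIntegral_mono_set hintsub
    · filter_upwards [ae_restrict_mem measurableSet_Ici] with s hs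
      have := hexple s hs
      simp only [Pi.zero_apply]
      linarith
    · exact HasSubset.Subset.eventuallyLE hIoisub
  have hconst : (1 - Real.exp (-θ)) * (η (Set.Ioi A)).toReal
      ≤ ∫ s in Set.Ioi A, (1 - Real.exp (-l * s)) ∂η := by
    rw [show (1 - Real.exp (-θ)) * (η (Set.Ioi A)).toReal = η.real (Set.Ioi A) • (1 - Real.exp (-θ)) by rw [smul_eq_mul, mul_comm, measureReal_def]]
    apply setIntegral_ge_of_const_le measurableSet_Ioi (measure_ne_top η _)
    · intro x hx
      have hx' : A < x := hx
      have hθlx : θ ≤ l * x := by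
        rw [hl, div_mul_eq_mul_div, le_div_iff₀ hA0]
        nlinarith
      have : Real.exp (-(l * x)) ≤ Real.exp (-θ) := Real.exp_le_exp.mpr (by linarith)
      rw [neg_mul] at *
      linarith
    · exact hintsub.mono_set hIoisub
  have hp0 : (0:ℝ) ≤ (η (Set.Ioi A)).toReal := ENNReal.toReal_nonneg
  have h1 : (1 - Real.exp (-θ)) * (η (Set.Ioi A)).toReal ≤ t * φ l := by
    have hexp := Real.add_one_le_exp (-(t * φ l))
    have := hsub ▸ hmono
    linarith
  have hlγ : l ^ γ = θ ^ γ * A ^ (-γ) := by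
    rw [hl, Real.div_rpow hθ0.le hA0.le, Real.rpow_neg hA0.le, div_eq_mul_inv]
  have hθγ0 : (0:ℝ) < θ ^ γ := Real.rpow_pos_of_pos hθ0 _
  have hAγ0 : (0:ℝ) < A ^ (-γ) := Real.rpow_pos_of_pos hA0 _
  have h2 : t * φ l ≤ c₁ * t * (θ ^ γ * A ^ (-γ)) := by
    have h := hφle l hl0 hls
    rw [hlγ] at h
    nlinarith
  have h12 := h1.trans h2
  have hD : (0:ℝ) < γ * (1 - Real.exp (-1)) := by
    apply mul_pos hγ; linarith
  have hfin : (η (Set.Ioi A)).toReal ≤ c₁ * t / (γ * (1 - Real.exp (-1))) * A ^ (-γ) := by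
    rw [div_mul_eq_mul_div, le_div_iff₀ hD]
    have hcancel : (η (Set.Ioi A)).toReal * (γ * (1 - Real.exp (-1))) * θ ^ γ
        ≤ c₁ * t * A ^ (-γ) * θ ^ γ := by
      nlinarith [mul_le_mul_of_nonneg_right hθkey hp0]
    exact le_of_mul_le_mul_right hcancel hθγ0
  calc η (Set.Ioi A) = ENNReal.ofReal (η (Set.Ioi A)).toReal :=
        (ENNReal.ofReal_toReal (measure_ne_top η _)).symm
    _ ≤ _ := ENNReal.ofReal_le_ofReal hfin
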